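/- Let p, q, r, ν be real numbers with q ≠ 0, ν ≠ 0 and 4 ν² r + p < 0, and let ε ∈ {1, −1}. Set a = ε ν √(−1/(4 ν² r + p)) and A = 12 ε (ν³/q) √(−1/(4 ν² r + p)). Then the function U(ξ) = A · csch²(ξ) satisfies (p a² + ν²) U′(ξ) − r q a U(ξ) U′(ξ) + r ν² a² U‴(ξ) = 0 for all ξ ≠ 0. -/

import Mathlib

private lemma hd1 (A ξ : ℝ) (hs : Real.sinh ξ ≠ 0) :
    HasDerivAt (fun x : ℝ => A * (1 / Real.sinh x) ^ 2)
      (-2 * A * Real.cosh ξ / Real.sinh ξ ^ 3) ξ := by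
  have h : HasDerivAt (fun x : ℝ => A * ((Real.sinh x) ^ 2)⁻¹)
      (A * (-(Real.cosh ξ * (2 * Real.sinh ξ)) / (Real.sinh ξ ^ 2) ^ 2)) ξ := by
    have h1 : HasDerivAt (fun x : ℝ => (Real.sinh x) ^ 2)
        (Real.cosh ξ * (2 * Real.sinh ξ)) ξ := by
      simpa [mul_comm] using ((Real.hasDerivAt_sinh ξ).fun_pow 2)
    exact (h1.inv (pow_ne_zero 2 hs)).const_mul A
  have : (fun x : ℝ => A * (1 / Real.sinh x) ^ 2)
      = fun x : ℝ => A * ((Real.sinh x) ^ 2)⁻¹ := by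
    funext x; rw [one_div, inv_pow]
  rw [this]
  convert h using 1
  field_simp

private lemma hd2 (A ξ : ℝ) (hs : Real.sinh ξ ≠ 0) :
    HasDerivAt (fun x : ℝ => -2 * A * Real.cosh x / Real.sinh x ^ 3)
      (-2 * A / Real.sinh ξ ^ 2 + 6 * A * Real.cosh ξ ^ 2 / Real.sinh ξ ^ 4) ξ := by
  have hnum : HasDerivAt (fun x : ℝ => -2 * A * Real.cosh x)
      (-2 * A * Real.sinh ξ) ξ := (Real.hasDerivAt_cosh ξ).const_mul (-2 * A)
  have hden : HasDerivAt (fun x : ℝ => Real.sinh x ^ 3)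
      (Real.cosh ξ * (3 * Real.sinh ξ ^ 2)) ξ := by
    simpa [mul_comm] using ((Real.hasDerivAt_sinh ξ).fun_pow 3)
  have := hnum.fun_div hden (pow_ne_zero 3 hs)
  refine this.congr_deriv ?_
  field_simp
  ring

private lemma hd3 (A ξ : ℝ) (hs : Real.sinh ξ ≠ 0) :
    HasDerivAt (fun x : ℝ => -2 * A / Real.sinh x ^ 2 + 6 * A * Real.cosh x ^ 2 / Real.sinh x ^ 4)
      (16 * A * Real.cosh ξ / Real.sinh ξ ^ 3
        - 24 * A * Real.cosh ξ ^ 3 / Real.sinh ξ ^ 5) ξ := by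
  have h1 : HasDerivAt (fun x : ℝ => -2 * A / Real.sinh x ^ 2)
      ((0 * Real.sinh ξ ^ 2 - (-2 * A) * (Real.cosh ξ * (2 * Real.sinh ξ)))
        / (Real.sinh ξ ^ 2) ^ 2) ξ := by
    have hden : HasDerivAt (fun x : ℝ => Real.sinh x ^ 2)
        (Real.cosh ξ * (2 * Real.sinh ξ)) ξ := by
      simpa [mul_comm] using ((Real.hasDerivAt_sinh ξ).fun_pow 2)
    exact (hasDerivAt_const ξ (-2 * A)).div hden (pow_ne_zero 2 hs)
  have h2 : HasDerivAt (fun x : ℝ => 6 * A * Real.cosh x ^ 2 / Real.sinh x ^ 4)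
      (((6 * A * (Real.sinh ξ * (2 * Real.cosh ξ))) * Real.sinh ξ ^ 4
        - (6 * A * Real.cosh ξ ^ 2) * (Real.cosh ξ * (4 * Real.sinh ξ ^ 3)))
        / (Real.sinh ξ ^ 4) ^ 2) ξ := by
    have hnum : HasDerivAt (fun x : ℝ => 6 * A * Real.cosh x ^ 2)
        (6 * A * (Real.sinh ξ * (2 * Real.cosh ξ))) ξ := by
      have := ((Real.hasDerivAt_cosh ξ).pow 2).const_mul (6 * A)
      simpa [mul_comm, mul_assoc, mul_left_comm] using this
    have hden : HasDerivAt (fun x : ℝ => Real.sinh x ^ 4)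
        (Real.cosh ξ * (4 * Real.sinh ξ ^ 3)) ξ := by
      simpa [mul_comm] using ((Real.hasDerivAt_sinh ξ).fun_pow 4)
    exact hnum.div hden (pow_ne_zero 4 hs)
  have h := h1.fun_add h2
  refine h.congr_deriv ?_
  field_simp
  ring

/-- The csch²-type traveling wave solutions of the once-integrated sRLW equation
`(p a² + ν²) U' - r q a U U' + r ν² a² U''' = 0` with explicit parameters. -/
theorem srlw_csch_explicit_solution
    (p q r ν ε : ℝ) (hq : q ≠ 0) (hν : ν ≠ 0)
    (hpr : 4 * ν ^ 2 * r + p < 0) (hε : ε = 1 ∨ ε = -1)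
    (a A : ℝ)
    (ha : a = ε * ν * Real.sqrt (-1 / (4 * ν ^ 2 * r + p)))
    (hA : A = 12 * ε * (ν ^ 3 / q) * Real.sqrt (-1 / (4 * ν ^ 2 * r + p))) :
    ∀ ξ : ℝ, ξ ≠ 0 →
      (p * a ^ 2 + ν ^ 2) * deriv (fun ξ : ℝ => A * (1 / Real.sinh ξ) ^ 2) ξ
      - r * q * a * (A * (1 / Real.sinh ξ) ^ 2)
          * deriv (fun ξ : ℝ => A * (1 / Real.sinh ξ) ^ 2) ξ
      + r * ν ^ 2 * a ^ 2
          * deriv (deriv (deriv (fun ξ : ℝ => A * (1 / Real.sinh ξ) ^ 2))) ξ = 0 := by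
  intro ξ hξ
  have hs : Real.sinh ξ ≠ 0 := Real.sinh_ne_zero.mpr hξ
  -- first derivative
  have e1 : ∀ x : ℝ, x ≠ 0 →
      deriv (fun x : ℝ => A * (1 / Real.sinh x) ^ 2) x
        = -2 * A * Real.cosh x / Real.sinh x ^ 3 := fun x hx =>
    (hd1 A x (Real.sinh_ne_zero.mpr hx)).deriv
  have mem : {x : ℝ | x ≠ 0} ∈ nhds ξ :=
    isOpen_compl_singleton.mem_nhds hξ
  have ev1 : deriv (fun x : ℝ => A * (1 / Real.sinh x) ^ 2)
      =ᶠ[nhds ξ] fun x => -2 * A * Real.cosh x / Real.sinh x ^ 3 :=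
    Filter.eventuallyEq_of_mem mem fun x hx => e1 x hx
  -- second derivative
  have e2 : ∀ x : ℝ, x ≠ 0 →
      deriv (deriv (fun x : ℝ => A * (1 / Real.sinh x) ^ 2)) x
        = -2 * A / Real.sinh x ^ 2 + 6 * A * Real.cosh x ^ 2 / Real.sinh x ^ 4 := by
    intro x hx
    have mem' : {y : ℝ | y ≠ 0} ∈ nhds x := isOpen_compl_singleton.mem_nhds hx
    have ev : deriv (fun y : ℝ => A * (1 / Real.sinh y) ^ 2)
        =ᶠ[nhds x] fun y => -2 * A * Real.cosh y / Real.sinh y ^ 3 :=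
      Filter.eventuallyEq_of_mem mem' fun y hy => e1 y hy
    rw [ev.deriv_eq]
    exact (hd2 A x (Real.sinh_ne_zero.mpr hx)).deriv
  have ev2 : deriv (deriv (fun x : ℝ => A * (1 / Real.sinh x) ^ 2))
      =ᶠ[nhds ξ] fun x =>
        -2 * A / Real.sinh x ^ 2 + 6 * A * Real.cosh x ^ 2 / Real.sinh x ^ 4 :=
    Filter.eventuallyEq_of_mem mem fun x hx => e2 x hx
  have e3 : deriv (deriv (deriv (fun x : ℝ => A * (1 / Real.sinh x) ^ 2))) ξ
      = 16 * A * Real.cosh ξ / Real.sinh ξ ^ 3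
        - 24 * A * Real.cosh ξ ^ 3 / Real.sinh ξ ^ 5 := by
    rw [ev2.deriv_eq]
    exact (hd3 A ξ hs).deriv
  rw [e1 ξ hξ, e3]
  -- algebraic identities
  set S := Real.sqrt (-1 / (4 * ν ^ 2 * r + p)) with hS
  have hD : 4 * ν ^ 2 * r + p ≠ 0 := ne_of_lt hpr
  have hS2 : S ^ 2 = -1 / (4 * ν ^ 2 * r + p) := by
    rw [hS]
    refine Real.sq_sqrt ?_
    rw [div_nonneg_iff]
    right
    constructor <;> linarith
  have hε2 : ε ^ 2 = 1 := by rcases hε with h | h <;> rw [h] <;> ring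
  have ha2 : a ^ 2 * (4 * ν ^ 2 * r + p) = -ν ^ 2 := by
    rw [ha]
    have : (ε * ν * S) ^ 2 = ε ^ 2 * ν ^ 2 * S ^ 2 := by ring
    rw [this, hε2, hS2]
    field_simp
    simp [show ν ^ 2 * 4 * r + p ≠ 0 by intro h; apply hD; linarith]
  have hqaA : q * a * A = 12 * ν ^ 2 * a ^ 2 := by
    rw [ha, hA]
    field_simp
  have hc : Real.cosh ξ ^ 2 = Real.sinh ξ ^ 2 + 1 := Real.cosh_sq ξ
  set s := Real.sinh ξ
  set c := Real.cosh ξ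
  linear_combination (norm := (field_simp; ring1)) (-2 * A * c / s ^ 3) * ha2 + (2 * r * A * c / s ^ 5) * hqaA +
    (-24 * r * ν ^ 2 * a ^ 2 * A * c / s ^ 5) * hc
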